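/- Let Z be a separable Banach space and suppose a family (A_ν)_{ν ∈ F} in Z and a sequence (b_j)_{j≥1} of nonnegative reals satisfy the recursion ‖A_ν‖ ≤ ∑_{j ∈ supp(ν)} ν_j b_j ‖A_{ν−e_j}‖ + C·c_ν for all ν, where c_ν = |ν|!·b^ν for ν ≠ 0 and c_0 arbitrary with ‖A_0‖ ≤ C·c_0. Then ‖A_ν‖ ≤ C·∑_{m ≤ ν} C(ν,m)·|m|!·b^m·c_{ν−m} for all ν. -/

import Mathlib

open Finset

lemma deg_add (μ σ : ℕ →₀ ℕ) : ((μ + σ).sum fun _ n => n)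
    = (μ.sum fun _ n => n) + (σ.sum fun _ n => n) :=
  Finsupp.sum_add_index' (fun _ => rfl) (fun _ _ _ => rfl)

lemma deg_sub_single {μ : ℕ →₀ ℕ} {j : ℕ} (h : μ j ≠ 0) :
    ((μ - Finsupp.single j 1).sum fun _ n => n) + 1 = μ.sum fun _ n => n := by
  have h1 : Finsupp.single j 1 ≤ μ := Finsupp.single_le_iff.2 (Nat.one_le_iff_ne_zero.2 h)
  conv_rhs => rw [← tsub_add_cancel_of_le h1]
  rw [deg_add]
  simp

lemma deg_pos {m : ℕ →₀ ℕ} (h : m ≠ 0) : 0 < m.sum fun _ n => n := by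
  rcases Finsupp.ne_iff.1 h with ⟨k, hk⟩
  simp only [Finsupp.coe_zero, Pi.zero_apply] at hk
  have : k ∈ m.support := Finsupp.mem_support_iff.2 hk
  calc 0 < m k := Nat.pos_of_ne_zero hk
    _ ≤ ∑ i ∈ m.support, m i := Finset.single_le_sum (fun _ _ => Nat.zero_le _) this
    _ = _ := rfl

lemma reindex (ν : ℕ →₀ ℕ) (j : ℕ) (hj : ν j ≠ 0) (F : (ℕ →₀ ℕ) → ℝ) :
    ∑ m ∈ Finset.Iic (ν - Finsupp.single j 1), F m
    = ∑ m ∈ (Finset.Iic ν).filter (fun m => m j ≠ 0), F (m - Finsupp.single j 1) := by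
  have hsν : Finsupp.single j 1 ≤ ν := Finsupp.single_le_iff.2 (Nat.one_le_iff_ne_zero.2 hj)
  refine Finset.sum_bij' (fun m _ => m + Finsupp.single j 1) (fun m _ => m - Finsupp.single j 1)
    ?_ ?_ ?_ ?_ ?_
  · intro m hm
    rw [Finset.mem_Iic] at hm
    rw [Finset.mem_filter, Finset.mem_Iic]
    constructor
    · exact (le_tsub_iff_right hsν).1 hm
    · simp [Finsupp.single_apply]
  · intro m hm
    rw [Finset.mem_filter, Finset.mem_Iic] at hm
    rw [Finset.mem_Iic]
    exact tsub_le_tsub_right hm.1 _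
  · intro m _
    ext k
    simp
  · intro m hm
    rw [Finset.mem_filter] at hm
    exact tsub_add_cancel_of_le (Finsupp.single_le_iff.2 (Nat.one_le_iff_ne_zero.2 hm.2))
  · intro m _
    rw [add_tsub_cancel_right]

-- the pointwise Nat choose identity
lemma choose_prod_id (ν m : ℕ →₀ ℕ) (hm : m ≤ ν) (j : ℕ) (hj : j ∈ ν.support) (hmj : m j ≠ 0) :
    ν j * ∏ k ∈ ν.support, ((ν - Finsupp.single j 1 : ℕ →₀ ℕ) k).choose ((m - Finsupp.single j 1 : ℕ →₀ ℕ) k)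
    = m j * ∏ k ∈ ν.support, (ν k).choose (m k) := by
  have h1 : ∏ k ∈ ν.support, ((ν - Finsupp.single j 1 : ℕ →₀ ℕ) k).choose ((m - Finsupp.single j 1 : ℕ →₀ ℕ) k)
      = ((ν j - 1).choose (m j - 1)) * ∏ k ∈ ν.support.erase j, (ν k).choose (m k) := by
    rw [← Finset.mul_prod_erase _ _ hj]
    congr 1
    · rw [Finsupp.tsub_apply, Finsupp.tsub_apply, Finsupp.single_apply, if_pos rfl]
    · refine Finset.prod_congr rfl fun k hk => ?_
      rw [Finset.mem_erase] at hk
      rw [Finsupp.tsub_apply, Finsupp.tsub_apply, Finsupp.single_apply,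
        if_neg (fun h => hk.1 h.symm)]
      rfl
  have h2 : ∏ k ∈ ν.support, (ν k).choose (m k)
      = ((ν j).choose (m j)) * ∏ k ∈ ν.support.erase j, (ν k).choose (m k) :=
    (Finset.mul_prod_erase _ _ hj).symm
  rw [h1, h2, ← mul_assoc, ← mul_assoc]
  congr 1
  obtain ⟨a, ha⟩ := Nat.exists_eq_succ_of_ne_zero (Finsupp.mem_support_iff.1 hj)
  obtain ⟨d, hd⟩ := Nat.exists_eq_succ_of_ne_zero hmj
  rw [ha, hd, Nat.succ_sub_one, Nat.succ_sub_one, Nat.add_one_mul_choose_eq, Nat.succ_eq_add_one, Nat.succ_eq_add_one]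
  ring

noncomputable def T (b : ℕ → ℝ) (c : (ℕ →₀ ℕ) → ℝ) (ν m : ℕ →₀ ℕ) : ℝ :=
  (∏ k ∈ ν.support, ((ν k).choose (m k) : ℝ)) *
    ((m.sum fun _ n => n).factorial : ℝ) * (m.prod fun k n => b k ^ n) * c (ν - m)

lemma key (b : ℕ → ℝ) (c : (ℕ →₀ ℕ) → ℝ) (ν : ℕ →₀ ℕ) :
    (∑ j ∈ ν.support, (ν j : ℝ) * b j *
        ∑ m ∈ Finset.Iic (ν - Finsupp.single j 1), T b c (ν - Finsupp.single j 1) m)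
      + c ν
    = ∑ m ∈ Finset.Iic ν, T b c ν m := by
  have h0mem : (0 : ℕ →₀ ℕ) ∈ Finset.Iic ν := Finset.mem_Iic.2 zero_le
  have step1 : ∀ j ∈ ν.support,
      (ν j : ℝ) * b j * ∑ m ∈ Finset.Iic (ν - Finsupp.single j 1), T b c (ν - Finsupp.single j 1) m
      = ∑ m ∈ Finset.Iic ν, (if m j ≠ 0 then
          (ν j : ℝ) * b j * T b c (ν - Finsupp.single j 1) (m - Finsupp.single j 1) else 0) := by
    intro j hj
    rw [reindex ν j (Finsupp.mem_support_iff.1 hj), Finset.sum_filter, Finset.mul_sum]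
    exact Finset.sum_congr rfl fun m _ => by rw [mul_ite, mul_zero]
  rw [Finset.sum_congr rfl step1, Finset.sum_comm]
  have hc : c ν = ∑ m ∈ Finset.Iic ν, (if m = 0 then c ν else 0) := by
    rw [Finset.sum_ite_eq' _ 0 (fun _ => c ν), if_pos h0mem]
  rw [hc, ← Finset.sum_add_distrib]
  refine Finset.sum_congr rfl fun m hm => ?_
  rw [Finset.mem_Iic] at hm
  by_cases hm0 : m = 0
  · subst hm0
    simp [T, Finsupp.prod_zero_index]
  · rw [if_neg hm0, add_zero]
    set D := m.sum fun _ n => n with hDdef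
    have hD : 0 < D := deg_pos hm0
    set Q : ℝ := (∏ k ∈ ν.support, ((ν k).choose (m k) : ℝ)) *
      ((D - 1).factorial : ℝ) * (m.prod fun k n => b k ^ n) * c (ν - m) with hQdef
    have claim : ∀ j ∈ ν.support,
        (if m j ≠ 0 then
          (ν j : ℝ) * b j * T b c (ν - Finsupp.single j 1) (m - Finsupp.single j 1) else 0)
        = (m j : ℝ) * Q := by
      intro j hj
      by_cases hmj : m j = 0
      · rw [if_neg (by simpa using hmj), hmj]
        simp
      · rw [if_pos hmj]
        have hej : Finsupp.single j 1 ≤ m := Finsupp.single_le_iff.2 (Nat.one_le_iff_ne_zero.2 hmj)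
        have hsub : m - Finsupp.single j 1 ≤ ν - Finsupp.single j 1 := tsub_le_tsub_right hm _
        -- (a) the c argument
        have ha : ν - Finsupp.single j 1 - (m - Finsupp.single j 1) = ν - m :=
          tsub_tsub_tsub_cancel_right hej
        -- (b) the degree
        have hb' : ((m - Finsupp.single j 1).sum fun _ n => n) = D - 1 := by
          have := deg_sub_single hmj
          omega
        -- (c) extend the choose product to ν.support
        have hcprod : (∏ k ∈ (ν - Finsupp.single j 1).support,
              (((ν - Finsupp.single j 1 : ℕ →₀ ℕ) k).choose
                ((m - Finsupp.single j 1 : ℕ →₀ ℕ) k) : ℝ))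
            = ∏ k ∈ ν.support,
              (((ν - Finsupp.single j 1 : ℕ →₀ ℕ) k).choose
                ((m - Finsupp.single j 1 : ℕ →₀ ℕ) k) : ℝ) := by
          refine Finset.prod_subset Finsupp.support_tsub fun k _ hk => ?_
          have h1 : (ν - Finsupp.single j 1 : ℕ →₀ ℕ) k = 0 := Finsupp.notMem_support_iff.1 hk
          have h2 : (m - Finsupp.single j 1 : ℕ →₀ ℕ) k = 0 :=
            Nat.le_zero.1 (h1 ▸ hsub k)
          rw [h1, h2]
          norm_num
        -- (d) the b-power product
        have hd' : m.prod (fun k n => b k ^ n)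
            = ((m - Finsupp.single j 1).prod fun k n => b k ^ n) * b j := by
          conv_lhs => rw [← tsub_add_cancel_of_le hej]
          rw [Finsupp.prod_add_index' (fun _ => pow_zero _) (fun _ _ _ => pow_add _ _ _)]
          congr 1
          simp
        -- (e) the cast choose identity
        have he : (ν j : ℝ) * ∏ k ∈ ν.support,
              (((ν - Finsupp.single j 1 : ℕ →₀ ℕ) k).choose
                ((m - Finsupp.single j 1 : ℕ →₀ ℕ) k) : ℝ)
            = (m j : ℝ) * ∏ k ∈ ν.support, ((ν k).choose (m k) : ℝ) := by
          have := choose_prod_id ν m hm j hj hmj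
          exact_mod_cast congrArg (Nat.cast : ℕ → ℝ) this
        rw [T, ha, hb', hcprod, hQdef, hd']
        set P' : ℝ := ∏ k ∈ ν.support,
          (((ν - Finsupp.single j 1 : ℕ →₀ ℕ) k).choose
            ((m - Finsupp.single j 1 : ℕ →₀ ℕ) k) : ℝ) with hP'
        set P : ℝ := ∏ k ∈ ν.support, ((ν k).choose (m k) : ℝ) with hP
        set F : ℝ := ((D - 1).factorial : ℝ) with hF
        set B : ℝ := (m - Finsupp.single j 1).prod fun k n => b k ^ n with hB
        set cc : ℝ := c (ν - m) with hcc
        linear_combination (b j * F * B * cc) * he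
    rw [Finset.sum_congr rfl claim, ← Finset.sum_mul]
    have hsum : ∑ j ∈ ν.support, (m j : ℝ) = (D : ℝ) := by
      rw [← Nat.cast_sum]
      congr 1
      rw [hDdef]
      exact (Finset.sum_subset (Finsupp.support_mono hm)
        (fun k _ hk => Finsupp.notMem_support_iff.1 hk)).symm
    rw [hsum, T, hQdef]
    have hfac : (D : ℝ) * ((D - 1).factorial : ℝ) = (D.factorial : ℝ) := by
      exact_mod_cast congrArg (Nat.cast : ℕ → ℝ) (Nat.mul_factorial_pred hD.ne')
    linear_combination ((∏ k ∈ ν.support, ((ν k).choose (m k) : ℝ)) *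
      (m.prod fun k n => b k ^ n) * c (ν - m)) * hfac

theorem abstract_recursion_lemma {Z : Type*} [NormedAddCommGroup Z] [NormedSpace ℝ Z]
    [CompleteSpace Z] [TopologicalSpace.SeparableSpace Z]
    (b : ℕ → ℝ) (hb : ∀ j, 0 ≤ b j) (C : ℝ) (hC : 0 ≤ C)
    (c : (ℕ →₀ ℕ) → ℝ) (A : (ℕ →₀ ℕ) → Z)
    (hc : ∀ ν : ℕ →₀ ℕ, ν ≠ 0 →
      c ν = ((ν.sum fun _ n => n).factorial : ℝ) * ν.prod fun j n => b j ^ n)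
    (h0 : ‖A 0‖ ≤ C * c 0)
    (hrec : ∀ ν : ℕ →₀ ℕ,
      ‖A ν‖ ≤ (∑ j ∈ ν.support, (ν j : ℝ) * b j * ‖A (ν - Finsupp.single j 1)‖) + C * c ν) :
    ∀ ν : ℕ →₀ ℕ, ‖A ν‖ ≤ C * ∑ m ∈ Finset.Iic ν,
      (∏ j ∈ ν.support, ((ν j).choose (m j) : ℝ)) *
        ((m.sum fun _ n => n).factorial : ℝ) * (m.prod fun j n => b j ^ n) * c (ν - m) := by
  have hbase : ‖A 0‖ ≤ C * ∑ m ∈ Finset.Iic (0 : ℕ →₀ ℕ), T b c 0 m := by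
    have hIic : Finset.Iic (0 : ℕ →₀ ℕ) = {0} := by
      ext m
      simp [Finset.mem_Iic, le_zero_iff]
    rw [hIic, Finset.sum_singleton]
    simpa [T, Finsupp.prod_zero_index] using h0
  suffices H : ∀ N (ν : ℕ →₀ ℕ), (ν.sum fun _ n => n) ≤ N →
      ‖A ν‖ ≤ C * ∑ m ∈ Finset.Iic ν, T b c ν m by
    intro ν
    exact H _ ν le_rfl
  intro N
  induction N with
  | zero =>
    intro ν hν
    have hν0 : ν = 0 := by
      by_contra h
      exact absurd hν (by simpa using (deg_pos h).trans_le hν |>.ne')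
    rw [hν0]
    exact hbase
  | succ N ih =>
    intro ν hν
    by_cases h : ν = 0
    · rw [h]; exact hbase
    · have hAle : ∀ j ∈ ν.support, ‖A (ν - Finsupp.single j 1)‖ ≤
          C * ∑ m ∈ Finset.Iic (ν - Finsupp.single j 1), T b c (ν - Finsupp.single j 1) m := by
        intro j hj
        refine ih _ ?_
        have := deg_sub_single (Finsupp.mem_support_iff.1 hj)
        omega
      calc ‖A ν‖ ≤ (∑ j ∈ ν.support, (ν j : ℝ) * b j * ‖A (ν - Finsupp.single j 1)‖)
            + C * c ν := hrec ν
        _ ≤ (∑ j ∈ ν.support, (ν j : ℝ) * b j *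
              (C * ∑ m ∈ Finset.Iic (ν - Finsupp.single j 1), T b c (ν - Finsupp.single j 1) m))
            + C * c ν := by
          refine add_le_add (Finset.sum_le_sum fun j hj => ?_) le_rfl
          exact mul_le_mul_of_nonneg_left (hAle j hj)
            (mul_nonneg (Nat.cast_nonneg _) (hb j))
        _ = C * ((∑ j ∈ ν.support, (ν j : ℝ) * b j *
              ∑ m ∈ Finset.Iic (ν - Finsupp.single j 1), T b c (ν - Finsupp.single j 1) m)
            + c ν) := by
          rw [mul_add, Finset.mul_sum]
          congr 1
          exact Finset.sum_congr rfl fun j _ => by ring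
        _ = C * ∑ m ∈ Finset.Iic ν, T b c ν m := by rw [key]
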